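/- The contiguity relation [(α+1)(1-β)/(1-β-n)] P_n(x; α+1, β-1, N) = (n+α+1) P_n(x; α, β, N) + [n(α+β+n)/(1-β-n)] P_{n-1}(x; α, β, N) holds as an identity of polynomials in x. -/

import Mathlib

noncomputable def poch (a : ℝ) (n : ℕ) : ℝ := ∏ i ∈ Finset.range n, (a + i)

/-- The R_I polynomial of Hahn type P_n(x; α, β, N). -/
noncomputable def P (α β : ℝ) (N n : ℕ) (x : ℝ) : ℝ :=
  ∑ k ∈ Finset.range (n + 1),
    poch (-(n : ℝ)) k * poch (α + 1) k /
      ((Nat.factorial k : ℝ) * poch (-(N : ℝ)) k * poch (1 - β - n) k) * poch (-x) k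

lemma poch_succ (a : ℝ) (k : ℕ) : poch a (k+1) = poch a k * (a + k) :=
  Finset.prod_range_succ _ _

lemma poch_shift (a : ℝ) (k : ℕ) : poch a (k+1) = a * poch (a+1) k := by
  unfold poch
  rw [Finset.prod_range_succ', mul_comm]
  congr 1
  · simp
  · exact Finset.prod_congr rfl fun i _ => by push_cast; ring

lemma poch_step (a : ℝ) (k : ℕ) : poch a k * (a + k) = a * poch (a+1) k := by
  rw [← poch_succ, poch_shift]

lemma poch_nat_zero (m k : ℕ) (h : m < k) : poch (-(m:ℝ)) k = 0 :=
  Finset.prod_eq_zero (Finset.mem_range.mpr h) (by simp)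

lemma frac_key (k : ℕ) (α β nn X : ℝ) (h1 : 1 - β - nn ≠ 0)
    (f q b b' m m' a a' : ℝ)
    (hf : f ≠ 0) (hq : q ≠ 0) (hb : b ≠ 0) (hb' : b' ≠ 0)
    (e1 : a * ((α+1) + k) = (α+1) * a')
    (e2 : b * ((1-β-nn) + k) = (1-β-nn) * b')
    (e3 : m * ((-nn) + k) = (-nn) * m') :
    (α+1)*(1-β)/(1-β-nn) * (m * a' / (f * q * b') * X)
      = (nn+α+1) * (m * a / (f * q * b) * X)
        + nn*(α+β+nn)/(1-β-nn) * (m' * a / (f * q * b') * X) := by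
  have key : (α+1)*(1-β) * (m * a' * b)
      = ((nn+α+1)*(1-β-nn)) * (m * a * b') + (nn*(α+β+nn)) * (m' * a * b) := by
    linear_combination (-(1-β)*m*b)*e1 + ((nn+α+1)*m*a)*e2 - ((α+β+nn)*a*b)*e3
  field_simp
  linear_combination X * key

theorem stmt12 (N n : ℕ) (α β : ℝ) (hn1 : 1 ≤ n) (hn2 : n ≤ N)
    (h1 : (1 - β - (n : ℝ)) ≠ 0)
    (h2 : ∀ k ≤ n, poch (1 - β - (n : ℝ)) k ≠ 0)
    (h3 : ∀ k ≤ n, poch (1 - (β - 1) - (n : ℝ)) k ≠ 0)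
    (h4 : ∀ k ≤ n, poch (1 - β - ((n : ℝ) - 1)) k ≠ 0)
    (h5 : ∀ k ≤ n, poch (-(N : ℝ)) k ≠ 0) :
    ∀ x : ℝ,
      (α + 1) * (1 - β) / (1 - β - (n : ℝ)) * P (α + 1) (β - 1) N n x
        = ((n : ℝ) + α + 1) * P α β N n x
          + (n : ℝ) * (α + β + n) / (1 - β - (n : ℝ)) * P α β N (n - 1) x := by
  intro x
  have hcast : ((n-1:ℕ):ℝ) = (n:ℝ) - 1 := by
    have := Nat.cast_sub (R := ℝ) hn1
    push_cast at this ⊢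
    linarith
  unfold P
  rw [Nat.sub_add_cancel hn1, hcast]
  rw [show -((n:ℝ)-1) = -(n:ℝ)+1 by ring, show (1:ℝ)-β-((n:ℝ)-1) = (1-β-(n:ℝ))+1 by ring,
      show (1:ℝ)-(β-1)-(n:ℝ) = (1-β-(n:ℝ))+1 by ring]
  have hzero : poch (-(n:ℝ)+1) n * poch (α + 1) n /
      ((Nat.factorial n : ℝ) * poch (-(N:ℝ)) n * poch ((1-β-(n:ℝ))+1) n) * poch (-x) n = 0 := by
    have hm'z : poch (-(n:ℝ)+1) n = 0 := by
      rw [show -(n:ℝ)+1 = -((n-1:ℕ):ℝ) by rw [hcast]; ring]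
      exact poch_nat_zero (n-1) n (by omega)
    rw [hm'z]
    simp
  rw [show (∑ k ∈ Finset.range n,
        poch (-(n:ℝ)+1) k * poch (α + 1) k /
          ((Nat.factorial k : ℝ) * poch (-(N:ℝ)) k * poch ((1-β-(n:ℝ))+1) k) * poch (-x) k)
      = ∑ k ∈ Finset.range (n+1),
        poch (-(n:ℝ)+1) k * poch (α + 1) k /
          ((Nat.factorial k : ℝ) * poch (-(N:ℝ)) k * poch ((1-β-(n:ℝ))+1) k) * poch (-x) k
      from by rw [Finset.sum_range_succ, hzero, add_zero]]
  rw [Finset.mul_sum, Finset.mul_sum, Finset.mul_sum, ← Finset.sum_add_distrib]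
  refine Finset.sum_congr rfl fun k hk => ?_
  rw [Finset.mem_range, Nat.lt_succ_iff] at hk
  have hb' : poch ((1-β-(n:ℝ))+1) k ≠ 0 := by
    have := h3 k hk
    rwa [show (1:ℝ)-(β-1)-(n:ℝ) = (1-β-(n:ℝ))+1 by ring] at this
  exact frac_key k α β (n:ℝ) (poch (-x) k) h1 (Nat.factorial k : ℝ) (poch (-(N:ℝ)) k)
    (poch (1-β-(n:ℝ)) k) (poch ((1-β-(n:ℝ))+1) k) (poch (-(n:ℝ)) k) (poch (-(n:ℝ)+1) k)
    (poch (α+1) k) (poch ((α+1)+1) k)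
    (by exact_mod_cast (Nat.factorial_pos k).ne') (h5 k hk) (h2 k hk) hb'
    (poch_step (α+1) k) (poch_step (1-β-(n:ℝ)) k) (poch_step (-(n:ℝ)) k)
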